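/- Let G = (⊕_ℤ ℤ) ⊕ G₀ with order G⁺ = {(ξ,g) : L(ξ,g)(x) > 0 ∀x ∈ S} ∪ {0}, where π⁻¹(0) = {ō} and g(ō) = 0 for g ∈ G₀. With Σ₀((zₙ), f) = Σₙ zₙ and α the automorphism (ξ,g) ↦ (σ(ξ), e^{−π}g): Σ₀ vanishes on (id − α)(G), and the induced map Σ : G/(id−α)(G) → ℤ sends the class of the positive cone into ℕ ∪ {0} and is surjective onto ℕ ∪ {0} on positive classes; i.e., Σ₀(G⁺) ⊆ ℕ and for every n ∈ ℕ there is an element of G⁺ with Σ₀-value n. -/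

import Mathlib

lemma sum_support_eq (f : ℤ →₀ ℤ) : (∑ n ∈ f.support, f n) = f.sum (fun _ x => x) := rfl

lemma sum_shift (ξ η : ℤ →₀ ℤ) (h : ∀ n : ℤ, η n = ξ (n + 1)) :
    (∑ n ∈ η.support, η n) = ∑ n ∈ ξ.support, ξ n := by
  have he : η = Finsupp.equivMapDomain (Equiv.addRight (1:ℤ)).symm ξ := by
    ext n
    simp [Finsupp.equivMapDomain_apply, h n, Equiv.addRight]
  rw [he, sum_support_eq, sum_support_eq, Finsupp.sum_equivMapDomain]

/-- With `Σ₀((zₙ),f) = Σₙ zₙ`, `α(ξ,g) = (σ(ξ), e^{−π}g)` and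
`G⁺ = {(ξ,g) : L(ξ,g) > 0 pointwise} ∪ {0}`: `Σ₀` vanishes on `(id − α)(G)`,
`Σ₀(G⁺) ⊆ ℕ ∪ {0}`, and every `N ∈ ℕ` is the `Σ₀`-value of an element of `G⁺`. -/
theorem stmt_14 {S : Type*} [TopologicalSpace S] [CompactSpace S] [T2Space S]
    (π : C(S, ℝ)) (o₀ : S) (hπo : π o₀ = 0) (hπ : ∀ x, π x = 0 → x = o₀)
    (G₀ : AddSubgroup C(S, ℝ)) (hvan : ∀ g ∈ G₀, g o₀ = 0)
    (L : (ℤ →₀ ℤ) → C(S, ℝ) → S → ℝ)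
    (hL : ∀ ξ g x, L ξ g x = g x + ∑ n ∈ ξ.support, (ξ n : ℝ) * Real.exp (n * π x)) :
    (∀ ξ η : ℤ →₀ ℤ, (∀ n : ℤ, η n = ξ (n + 1)) →
        (∑ n ∈ (ξ - η).support, (ξ - η) n) = 0) ∧
    (∀ (ξ : ℤ →₀ ℤ) (g : C(S, ℝ)), g ∈ G₀ → (∀ x, 0 < L ξ g x) →
        0 ≤ ∑ n ∈ ξ.support, ξ n) ∧
    (∀ N : ℕ, ∃ (ξ : ℤ →₀ ℤ) (g : C(S, ℝ)), g ∈ G₀ ∧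
        ((ξ = 0 ∧ g = 0) ∨ ∀ x, 0 < L ξ g x) ∧
        (∑ n ∈ ξ.support, ξ n) = (N : ℤ)) := by
  refine ⟨?_, ?_, ?_⟩
  · intro ξ η h
    rw [sum_support_eq, Finsupp.sum_sub_index (by intros; rfl)]
    rw [← sum_support_eq, ← sum_support_eq, sum_shift ξ η h, sub_self]
  · intro ξ g hg hpos
    have h0 := hpos o₀
    rw [hL, hvan g hg, hπo] at h0
    simp only [mul_zero, Real.exp_zero, mul_one, zero_add] at h0
    have : (0:ℝ) ≤ (∑ n ∈ ξ.support, ξ n : ℤ) := by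
      push_cast
      exact h0.le
    exact_mod_cast this
  · intro N
    rcases Nat.eq_zero_or_pos N with h0 | hN
    · exact ⟨0, 0, G₀.zero_mem, Or.inl ⟨rfl, rfl⟩, by simp [h0]⟩
    · refine ⟨Finsupp.single 0 (N : ℤ), 0, G₀.zero_mem, Or.inr fun x => ?_, ?_⟩
      · rw [hL]
        have hs : (Finsupp.single (0:ℤ) (N:ℤ)).support = {0} :=
          Finsupp.support_single_ne_zero _ (by exact_mod_cast hN.ne')
        rw [hs]
        simp only [ContinuousMap.zero_apply, Finset.sum_singleton, Finsupp.single_eq_same,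
          Int.cast_zero, zero_mul, Real.exp_zero, mul_one, zero_add, Int.cast_natCast]
        exact_mod_cast hN
      · have hs : (Finsupp.single (0:ℤ) (N:ℤ)).support = {0} :=
          Finsupp.support_single_ne_zero _ (by exact_mod_cast hN.ne')
        rw [hs, Finset.sum_singleton]
        exact Finsupp.single_eq_same
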